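/- For real numbers p ∈ [0,1], q = 1-p, and vectors r₁, r₂ ∈ ℝ³, the trace norm of the Helstrom matrix Δ = pρ(r₁) - qρ(r₂) satisfies ‖Δ‖₁ = max(‖w‖, |p-q|), where w = p r₁ - q r₂; that is, ‖Δ‖₁ = ‖w‖ if ‖w‖ ≥ |p-q| and ‖Δ‖₁ = |p-q| otherwise (Eq. (9) of the paper). -/

import Mathlib

noncomputable section

open Matrix Complex
open scoped ComplexOrder

/-- Pauli matrix σ_x. -/
def σx : Matrix (Fin 2) (Fin 2) ℂ := !![0, 1; 1, 0]
/-- Pauli matrix σ_y. -/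
def σy : Matrix (Fin 2) (Fin 2) ℂ := !![0, -Complex.I; Complex.I, 0]
/-- Pauli matrix σ_z. -/
def σz : Matrix (Fin 2) (Fin 2) ℂ := !![1, 0; 0, -1]

/-- The qubit operator with Bloch vector `r`: ρ(r) = (1/2)(I + x σx + y σy + z σz). -/
def blochRho (r : EuclideanSpace ℝ (Fin 3)) : Matrix (Fin 2) (Fin 2) ℂ :=
  (1 / 2 : ℂ) • ((1 : Matrix (Fin 2) (Fin 2) ℂ)
    + (r 0 : ℂ) • σx + (r 1 : ℂ) • σy + (r 2 : ℂ) • σz)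

/-- The trace norm ‖A‖₁ = Tr √(AᴴA). -/
def traceNorm (A : Matrix (Fin 2) (Fin 2) ℂ) : ℝ :=
  (let hA := Matrix.posSemidef_conjTranspose_mul_self A
   (hA.1.eigenvectorUnitary : Matrix (Fin 2) (Fin 2) ℂ) *
     diagonal (((↑) : ℝ → ℂ) ∘ Real.sqrt ∘ hA.1.eigenvalues) *
     (star hA.1.eigenvectorUnitary : Matrix (Fin 2) (Fin 2) ℂ)).trace.re

private lemma exists_cd (a n : ℝ) (hn : 0 ≤ n) :
    ∃ c d : ℝ, 0 ≤ c ∧ d ^ 2 * n ^ 2 ≤ c ^ 2 ∧ 4 * (c * d) = a ∧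
      4 * (c ^ 2 + d ^ 2 * n ^ 2) = a ^ 2 + n ^ 2 ∧ 2 * c = max n |a| := by
  rcases le_total n |a| with h | h
  · rcases eq_or_ne a 0 with rfl | ha
    · have hn0 : n = 0 := le_antisymm (by simpa using h) hn
      exact ⟨0, 0, le_refl _, by simp, by ring, by simp [hn0], by simp [hn0]⟩
    · have ha' : (0:ℝ) < |a| := abs_pos.mpr ha
      have h2 : |a| ^ 2 = a ^ 2 := _root_.sq_abs a
      refine ⟨|a| / 2, a / (2 * |a|), by positivity, ?_, ?_, ?_, ?_⟩
      · rw [div_pow, div_pow, div_mul_eq_mul_div,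
          div_le_div_iff₀ (by positivity) (by positivity)]
        nlinarith [mul_le_mul h h hn (le_of_lt ha'), sq_nonneg a, sq_nonneg n]
      · field_simp
        nlinarith [h2]
      · field_simp
        nlinarith [h2, sq_nonneg n]
      · rw [max_eq_right h]; ring
  · rcases eq_or_lt_of_le hn with hn0 | hn0
    · have ha0 : a = 0 := by
        have := le_trans h hn0.symm.le
        simpa [abs_nonpos_iff] using this
      exact ⟨0, 0, le_refl _, by simp, by simp [ha0], by simp [ha0, ← hn0], by simp [← hn0, ha0]⟩
    · have h2 : a ^ 2 ≤ n ^ 2 := by nlinarith [abs_nonneg a, _root_.sq_abs a]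
      refine ⟨n / 2, a / (2 * n), by positivity, ?_, ?_, ?_, ?_⟩
      · rw [div_pow, div_pow, div_mul_eq_mul_div,
          div_le_div_iff₀ (by positivity) (by positivity)]
        nlinarith [sq_nonneg n]
      · field_simp; ring
      · field_simp; ring
      · rw [max_eq_left h]; ring

private lemma quad_nonneg (c d w0 w1 w2 n u v t X : ℝ) (hc : 0 ≤ c) (hX : 0 ≤ X)
    (hdn : d ^ 2 * n ^ 2 ≤ c ^ 2) (hn2 : n ^ 2 = w0 ^ 2 + w1 ^ 2 + w2 ^ 2)
    (huv : u ^ 2 + v ^ 2 + t ^ 2 = X ^ 2) :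
    0 ≤ c * X + d * (w0 * u + w1 * v + w2 * t) := by
  have cs : (w0 * u + w1 * v + w2 * t) ^ 2 ≤ n ^ 2 * X ^ 2 := by
    rw [hn2, ← huv]
    nlinarith [sq_nonneg (w0 * v - w1 * u), sq_nonneg (w0 * t - w2 * u),
      sq_nonneg (w1 * t - w2 * v)]
  have h2 : (d * (w0 * u + w1 * v + w2 * t)) ^ 2 ≤ (c * X) ^ 2 := by
    have := mul_le_mul_of_nonneg_left cs (sq_nonneg d)
    have := mul_le_mul_of_nonneg_right hdn (sq_nonneg X)
    nlinarith
  nlinarith [sq_nonneg (c * X + d * (w0 * u + w1 * v + w2 * t)), mul_nonneg hc hX]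

private lemma traceNorm_explicit (a w0 w1 w2 n : ℝ)
    (hn2 : n ^ 2 = w0 ^ 2 + w1 ^ 2 + w2 ^ 2)
    (c d : ℝ) (hc : 0 ≤ c) (hdn : d ^ 2 * n ^ 2 ≤ c ^ 2) (hcd : 4 * (c * d) = a)
    (hc2 : 4 * (c ^ 2 + d ^ 2 * n ^ 2) = a ^ 2 + n ^ 2) :
    traceNorm ((1/2 : ℂ) • !![(a + w2 : ℂ), w0 - w1 * Complex.I;
        w0 + w1 * Complex.I, (a : ℂ) - w2]) = 2 * c := by
  have hc2' : 4 * (c ^ 2 + d ^ 2 * (w0 ^ 2 + w1 ^ 2 + w2 ^ 2))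
      = a ^ 2 + (w0 ^ 2 + w1 ^ 2 + w2 ^ 2) := by rw [← hn2]; exact hc2
  set Δ : Matrix (Fin 2) (Fin 2) ℂ := (1/2 : ℂ) • !![(a + w2 : ℂ), w0 - w1 * Complex.I;
        w0 + w1 * Complex.I, (a : ℂ) - w2] with hΔ
  set S : Matrix (Fin 2) (Fin 2) ℂ := !![(c + d * w2 : ℂ), d * w0 - d * w1 * Complex.I;
        d * w0 + d * w1 * Complex.I, (c : ℂ) - d * w2] with hSdef
  have hherm : S.IsHermitian := by
    ext i j
    fin_cases i <;> fin_cases j <;>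
      simp [hSdef, Matrix.conjTranspose_apply, Complex.ext_iff]
  have hS : S.PosSemidef := by
    refine Matrix.PosSemidef.of_dotProduct_mulVec_nonneg hherm (fun x => ?_)
    have hform : dotProduct (star x) (S *ᵥ x)
        = ((c * (((x 0).re ^ 2 + (x 0).im ^ 2) + ((x 1).re ^ 2 + (x 1).im ^ 2))
          + d * (w0 * (2 * ((x 0).re * (x 1).re + (x 0).im * (x 1).im))
            + w1 * (2 * ((x 0).re * (x 1).im - (x 0).im * (x 1).re))
            + w2 * (((x 0).re ^ 2 + (x 0).im ^ 2) - ((x 1).re ^ 2 + (x 1).im ^ 2))) : ℝ) : ℂ) := by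
      simp only [dotProduct, Matrix.mulVec, Fin.sum_univ_two, hSdef, Pi.star_apply,
        Matrix.cons_val', Matrix.cons_val_zero, Matrix.cons_val_one, Matrix.head_cons,
        Matrix.head_fin_const, Matrix.empty_val', Matrix.cons_val_fin_one, RCLike.star_def]
      apply Complex.ext <;>
        simp [Complex.add_re, Complex.add_im, Complex.mul_re, Complex.mul_im,
          ← Complex.ofReal_pow, Complex.ofReal_re, Complex.ofReal_im] <;> ring
    rw [hform, Complex.zero_le_real]
    apply quad_nonneg c d w0 w1 w2 n _ _ _ _ hc (by positivity) hdn hn2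
    ring
  have hsq : S ^ 2 = Δᴴ * Δ := by
    rw [pow_two]
    ext i j
    fin_cases i <;> fin_cases j
    · simp only [hSdef, hΔ, Matrix.mul_apply, Fin.sum_univ_two, Matrix.conjTranspose_apply,
        Matrix.smul_apply, Matrix.cons_val', Matrix.cons_val_zero, Matrix.cons_val_one,
        Matrix.head_cons, Matrix.head_fin_const, Matrix.empty_val', Matrix.cons_val_fin_one,
        smul_eq_mul, star_mul', map_add, map_sub, _root_.map_mul, Complex.conj_I,
        Complex.conj_ofReal, RCLike.star_def]
      apply Complex.ext <;> simp [Complex.add_re, Complex.add_im, Complex.mul_re, Complex.mul_im]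
      · linear_combination hc2' / 4 + (w2 / 2) * hcd
      · ring
    · simp only [hSdef, hΔ, Matrix.mul_apply, Fin.sum_univ_two, Matrix.conjTranspose_apply,
        Matrix.smul_apply, Matrix.cons_val', Matrix.cons_val_zero, Matrix.cons_val_one,
        Matrix.head_cons, Matrix.head_fin_const, Matrix.empty_val', Matrix.cons_val_fin_one,
        smul_eq_mul, star_mul', map_add, map_sub, _root_.map_mul, Complex.conj_I,
        Complex.conj_ofReal, RCLike.star_def]
      apply Complex.ext <;> simp [Complex.add_re, Complex.add_im, Complex.mul_re, Complex.mul_im]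
      · linear_combination (w0 / 2) * hcd
      · linear_combination (-w1 / 2) * hcd
    · simp only [hSdef, hΔ, Matrix.mul_apply, Fin.sum_univ_two, Matrix.conjTranspose_apply,
        Matrix.smul_apply, Matrix.cons_val', Matrix.cons_val_zero, Matrix.cons_val_one,
        Matrix.head_cons, Matrix.head_fin_const, Matrix.empty_val', Matrix.cons_val_fin_one,
        smul_eq_mul, star_mul', map_add, map_sub, _root_.map_mul, Complex.conj_I,
        Complex.conj_ofReal, RCLike.star_def]
      apply Complex.ext <;> simp [Complex.add_re, Complex.add_im, Complex.mul_re, Complex.mul_im]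
      · linear_combination (w0 / 2) * hcd
      · linear_combination (w1 / 2) * hcd
    · simp only [hSdef, hΔ, Matrix.mul_apply, Fin.sum_univ_two, Matrix.conjTranspose_apply,
        Matrix.smul_apply, Matrix.cons_val', Matrix.cons_val_zero, Matrix.cons_val_one,
        Matrix.head_cons, Matrix.head_fin_const, Matrix.empty_val', Matrix.cons_val_fin_one,
        smul_eq_mul, star_mul', map_add, map_sub, _root_.map_mul, Complex.conj_I,
        Complex.conj_ofReal, RCLike.star_def]
      apply Complex.ext <;> simp [Complex.add_re, Complex.add_im, Complex.mul_re, Complex.mul_im]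
      · linear_combination hc2' / 4 - (w2 / 2) * hcd
      · ring
  have hsqrt : (let hA := Matrix.posSemidef_conjTranspose_mul_self Δ
      (hA.1.eigenvectorUnitary : Matrix (Fin 2) (Fin 2) ℂ) *
        diagonal (((↑) : ℝ → ℂ) ∘ Real.sqrt ∘ hA.1.eigenvalues) *
        (star hA.1.eigenvectorUnitary : Matrix (Fin 2) (Fin 2) ℂ)) = S := by
    open scoped MatrixOrder in
    have key : CFC.sqrt (Δᴴ * Δ) = S := by rw [← hsq]; exact CFC.sqrt_sq S hS.nonneg
    open scoped MatrixOrder in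
    rw [← key, CFC.sqrt_eq_cfc,
      cfc_nnreal_eq_real _ _ (Matrix.posSemidef_conjTranspose_mul_self Δ).nonneg,
      (Matrix.posSemidef_conjTranspose_mul_self Δ).1.cfc_eq]
    simp only [Matrix.IsHermitian.cfc, Unitary.conjStarAlgAut_apply]
    unfold Real.sqrt
    rfl
  rw [show traceNorm Δ = S.trace.re from congrArg (fun M => (Matrix.trace M).re) hsqrt]
  simp [hSdef, Matrix.trace_fin_two]
  ring

/-- For p ∈ [0,1], q = 1-p, the trace norm of the Helstrom matrix Δ = pρ(r₁) - qρ(r₂)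
satisfies ‖Δ‖₁ = max(‖w‖, |p-q|), where w = p r₁ - q r₂. -/
theorem helstrom_traceNorm_eq_max
    (p : ℝ) (hp : p ∈ Set.Icc (0 : ℝ) 1) (q : ℝ) (hq : q = 1 - p)
    (r₁ r₂ : EuclideanSpace ℝ (Fin 3)) :
    traceNorm ((p : ℂ) • blochRho r₁ - (q : ℂ) • blochRho r₂)
      = max ‖p • r₁ - q • r₂‖ |p - q| := by
  set w : EuclideanSpace ℝ (Fin 3) := p • r₁ - q • r₂ with hwdef
  have hwi : ∀ i, w i = p * r₁ i - q * r₂ i := by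
    intro i; simp [hwdef]
  have hn2 : ‖w‖ ^ 2 = (w 0) ^ 2 + (w 1) ^ 2 + (w 2) ^ 2 := by
    rw [EuclideanSpace.norm_eq, Real.sq_sqrt (by positivity)]
    simp [Fin.sum_univ_three, Real.norm_eq_abs, _root_.sq_abs]
  have hM : (p : ℂ) • blochRho r₁ - (q : ℂ) • blochRho r₂
      = (1/2 : ℂ) • !![((p - q : ℝ) + (w 2 : ℝ) : ℂ), (w 0 : ℝ) - (w 1 : ℝ) * Complex.I;
          (w 0 : ℝ) + (w 1 : ℝ) * Complex.I, ((p - q : ℝ) : ℂ) - (w 2 : ℝ)] := by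
    ext i j
    fin_cases i <;> fin_cases j <;>
      · simp [blochRho, σx, σy, σz, hwi, Matrix.one_apply, Complex.ext_iff]
        push_cast
        try constructor
        all_goals try trivial
        all_goals ring
  obtain ⟨c, d, hc, hdn, hcd, hc2, hmax⟩ := exists_cd (p - q) ‖w‖ (norm_nonneg w)
  rw [hM, traceNorm_explicit (p - q) (w 0) (w 1) (w 2) ‖w‖ hn2 c d hc hdn hcd hc2, hmax]
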